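/- arXiv:1508.03026 — 9 statements merged into one kernel-verified Lean document; each statement's English description precedes it below -/
import Mathlib

section
/- Let F = (f₁,…,f_n) : (𝔽₂)ⁿ → (𝔽₂)ⁿ be a Boolean network and suppose the coordinate function f_t admits a layer representation with layers L₁,…,L_r, canalizing inputs (a_j), and constant b. Let k ∈ L_ρ for some 1 ≤ ρ ≤ r, let u ∈ (𝔽₂)ⁿ, and set v = F(u). Assume: (1) for every i < ρ and every j ∈ L_i, u_j ≠ a_j (no variable in a more dominant layer assumes its canalizing input at u); (2) a_k = 0; (3) u_k = 1; and (4) b + (ρ − 1) = v_t + 1 in 𝔽₂ (the canalizing output of x_k is the negation of v_t). Then the network F′ obtained from F by deleting the edge x_k → x_t satisfies F′(u)_t = v_t + 1; in particular F′(u) ≠ v, i.e., the state-space transition (u, v) is eliminated. -/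
/-- Evaluation of the nested expression built from a list of (already evaluated)
extended monomial values `[M₁, …, M_r]` and a core value `p`:
`nestAux [] p = p` and `nestAux (m :: ms) p = m * nestAux ms p + 1`.
With this convention, the layer form
`f = M₁(M₂(⋯(M_{r−1}(M_r·P_c + 1) + 1)⋯) + 1) + b` equals
`nestAux [M₁,…,M_r] P_c + 1 + b` in `ZMod 2`. -/
def nestAux : List (ZMod 2) → ZMod 2 → ZMod 2
  | [], p => p
  | m :: ms, p => m * nestAux ms p + 1

/-- A layer representation of a Boolean function `f : (𝔽₂)ⁿ → 𝔽₂`: `r ≥ 1` pairwise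
disjoint nonempty layers `L₁,…,L_r` of variable indices, canalizing inputs `a j`,
a constant `b`, and a core function `Pc` depending only on the variables outside all
layers and having no canalizing variables (or being the constant `1`), such that
`f(x) = M₁(M₂(⋯(M_{r−1}(M_r·P_c + 1) + 1)⋯) + 1) + b`
where `M_i = ∏_{j ∈ L_i} (x_j + a_j)`, all arithmetic in `𝔽₂ = ZMod 2`. -/
structure LayerRep (n : ℕ) (f : (Fin n → ZMod 2) → ZMod 2) where
  r : ℕ
  r_pos : 0 < r
  L : Fin r → Finset (Fin n)
  a : Fin n → ZMod 2
  b : ZMod 2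
  Pc : (Fin n → ZMod 2) → ZMod 2
  layers_nonempty : ∀ i, (L i).Nonempty
  layers_disjoint : ∀ i j, i ≠ j → Disjoint (L i) (L j)
  Pc_depends : ∀ x y : Fin n → ZMod 2,
    (∀ j : Fin n, (∀ i, j ∉ L i) → x j = y j) → Pc x = Pc y
  Pc_noncanalizing : (∀ x, Pc x = 1) ∨
    (∀ (j : Fin n) (c d : ZMod 2), ¬ ∀ x, x j = c → Pc x = d)
  repr_eq : ∀ x, f x =
    nestAux (List.ofFn fun i => ∏ j ∈ L i, (x j + a j)) (Pc x) + 1 + b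

lemma nestAux_eq_of_zero : ∀ (l : List (ZMod 2)) (p : ZMod 2) (i : ℕ) (hi : i < l.length),
    l[i] = 0 → (∀ j (hj : j < i), l[j]'(by omega) = 1) → nestAux l p = 1 + (i : ZMod 2)
  | m :: ms, p, 0, hi, h0, _ => by
      simp at h0; simp [nestAux, h0]
  | m :: ms, p, i + 1, hi, h0, h1 => by
      have hm : m = 1 := by simpa using h1 0 (by omega)
      have := nestAux_eq_of_zero ms p i (by simpa using hi) (by simpa using h0)
        (fun j hj => by simpa using h1 (j+1) (by omega))
      simp [nestAux, hm, this]
      ring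

/-- Deleting the edge `x_k → x_t` in the Boolean network `F`: the coordinate
function `f_t` is replaced by `x ↦ f_t(x[k := 0])` (the `k`-th input set to `0`),
all other coordinate functions are unchanged. -/
def deleteEdge {n : ℕ} (F : (Fin n → ZMod 2) → Fin n → ZMod 2) (k t : Fin n) :
    (Fin n → ZMod 2) → Fin n → ZMod 2 :=
  fun x i => if i = t then F (Function.update x k 0) t else F x i

/-- Method 1 (edge deletion): if (1) no variable in a layer of `f_t` more dominant
than that of `x_k` assumes its canalizing input at `u`, (2) `x_k` has canalizing
input `0`, (3) `u_k = 1`, and (4) the canalizing output `b + (ρ − 1)` of `x_k` is the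
negation of `v_t`, then deleting the edge `x_k → x_t` eliminates the state-space
transition `(u, v)`, where `v = F(u)`. (Layers are indexed by `Fin R.r`, so the layer
`ρ` here is `0`-indexed and the canalizing output of its variables is `b + ρ`.) -/
theorem edge_deletion_eliminates_transition {n : ℕ}
    (F : (Fin n → ZMod 2) → Fin n → ZMod 2) (t k : Fin n)
    (R : LayerRep n (fun x => F x t)) (ρ : Fin R.r) (hk : k ∈ R.L ρ)
    (u v : Fin n → ZMod 2) (hv : v = F u)
    (h1 : ∀ i : Fin R.r, i < ρ → ∀ j ∈ R.L i, u j ≠ R.a j)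
    (h2 : R.a k = 0) (h3 : u k = 1)
    (h4 : R.b + ((ρ : ℕ) : ZMod 2) = v t + 1) :
    deleteEdge F k t u t = v t + 1 ∧ deleteEdge F k t u ≠ v := by
  set x := Function.update u k 0 with hx
  have key : F x t = R.b + ((ρ : ℕ) : ZMod 2) := by
    have hrepr := R.repr_eq x
    have h0 : (List.ofFn fun i => ∏ j ∈ R.L i, (x j + R.a j))[(ρ : ℕ)]'(by
        simpa using ρ.isLt) = 0 := by
      simp only [List.getElem_ofFn]
      apply Finset.prod_eq_zero (by simpa using hk)
      simp [hx, Function.update_self, h2]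
    have h1' : ∀ j (hj : j < (ρ : ℕ)),
        (List.ofFn fun i => ∏ j ∈ R.L i, (x j + R.a j))[j]'(by
          simp; omega) = 1 := by
      intro j hj
      simp only [List.getElem_ofFn]
      apply Finset.prod_eq_one
      intro m hm
      have hmk : m ≠ k := by
        intro h; subst h
        have := R.layers_disjoint _ _ (by
          intro h
          have := Fin.val_eq_of_eq h
          simp at this; omega : (⟨j, by omega⟩ : Fin R.r) ≠ ρ)
        exact absurd hk (Finset.disjoint_left.mp this hm)
      have hxm : x m = u m := Function.update_of_ne hmk _ _
      have hne : u m ≠ R.a m := h1 ⟨j, by omega⟩ (by simpa [Fin.lt_def] using hj) m hm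
      rw [hxm]
      have hne0 : u m + R.a m ≠ 0 := fun h => hne (by
        rw [add_eq_zero_iff_eq_neg.mp h, CharTwo.neg_eq])
      have : ∀ z : ZMod 2, z ≠ 0 → z = 1 := by decide
      exact this _ hne0
    rw [nestAux_eq_of_zero _ _ (ρ : ℕ) (by simpa using ρ.isLt) h0 h1'] at hrepr
    rw [hrepr]
    have h2two : (2 : ZMod 2) = 0 := by decide
    ring_nf
    rw [h2two]; ring
  have hdel : deleteEdge F k t u t = R.b + ((ρ : ℕ) : ZMod 2) := by
    simp [deleteEdge, ← hx, key]
  constructor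
  · rw [hdel, h4]
  · intro h
    have : deleteEdge F k t u t = v t := by rw [h]
    rw [hdel, h4] at this
    exact one_ne_zero (left_eq_add.mp this.symm)
end

section
/- Let F = (f₁,…,f_n) : (𝔽₂)ⁿ → (𝔽₂)ⁿ be a Boolean network and suppose the coordinate function f_t admits a layer representation with layers L₁,…,L_r, canalizing inputs (a_j), and constant b. Let k ∈ L_ρ for some 1 ≤ ρ ≤ r, let u ∈ (𝔽₂)ⁿ, and set v = F(u). Assume: (1) for every i < ρ and every j ∈ L_i, u_j ≠ a_j; (2) a_k = 1; (3) u_k = 0; and (4) b + (ρ − 1) = v_t + 1 in 𝔽₂. Then the network F′ obtained from F by constantly expressing the edge x_k → x_t satisfies F′(u)_t = v_t + 1; in particular F′(u) ≠ v, i.e., the state-space transition (u, v) is eliminated. -/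
/-- Constantly expressing the edge `x_k → x_t` in the Boolean network `F`: the
coordinate function `f_t` is replaced by `x ↦ f_t(x[k := 1])` (the `k`-th input set
to `1`), all other coordinate functions are unchanged. -/
def expressEdge {n : ℕ} (F : (Fin n → ZMod 2) → Fin n → ZMod 2) (k t : Fin n) :
    (Fin n → ZMod 2) → Fin n → ZMod 2 :=
  fun x i => if i = t then F (Function.update x k 1) t else F x i

lemma nestAux_ones_zero (l1 l2 : List (ZMod 2)) (p : ZMod 2)
    (h : ∀ m ∈ l1, m = (1 : ZMod 2)) :
    nestAux (l1 ++ 0 :: l2) p = 1 + (l1.length : ZMod 2) := by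
  induction l1 with
  | nil => simp [nestAux]
  | cons m l1 ih =>
    have hm : m = 1 := h m (by simp)
    have e : nestAux ((m :: l1) ++ 0 :: l2) p = m * nestAux (l1 ++ 0 :: l2) p + 1 := rfl
    rw [e, ih (fun x hx => h x (List.mem_cons_of_mem _ hx)), hm, one_mul]
    simp only [List.length_cons, Nat.cast_add, Nat.cast_one]
    ring

/-- Method 1 (constant expression): if (1) no variable in a layer of `f_t` more
dominant than that of `x_k` assumes its canalizing input at `u`, (2) `x_k` has
canalizing input `1`, (3) `u_k = 0`, and (4) the canalizing output `b + (ρ − 1)` of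
`x_k` is the negation of `v_t`, then constantly expressing the edge `x_k → x_t`
eliminates the state-space transition `(u, v)`, where `v = F(u)`. (Layers are indexed
by `Fin R.r`, so the layer `ρ` here is `0`-indexed and the canalizing output of its
variables is `b + ρ`.) -/
theorem edge_expression_eliminates_transition {n : ℕ}
    (F : (Fin n → ZMod 2) → Fin n → ZMod 2) (t k : Fin n)
    (R : LayerRep n (fun x => F x t)) (ρ : Fin R.r) (hk : k ∈ R.L ρ)
    (u v : Fin n → ZMod 2) (hv : v = F u)
    (h1 : ∀ i : Fin R.r, i < ρ → ∀ j ∈ R.L i, u j ≠ R.a j)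
    (h2 : R.a k = 1) (h3 : u k = 0)
    (h4 : R.b + ((ρ : ℕ) : ZMod 2) = v t + 1) :
    expressEdge F k t u t = v t + 1 ∧ expressEdge F k t u ≠ v := by
  have neq_add : ∀ x y : ZMod 2, x ≠ y → x + y = 1 := by decide
  set u' := Function.update u k 1 with hu'
  set g : Fin R.r → ZMod 2 := fun i => ∏ j ∈ R.L i, (u' j + R.a j) with hg
  have hρl : (ρ : ℕ) < (List.ofFn g).length := by
    rw [List.length_ofFn]; exact ρ.isLt
  have hgρ : g ρ = 0 := by
    apply Finset.prod_eq_zero hk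
    rw [hu', Function.update_self, h2]
    decide
  have hg1 : ∀ i : Fin R.r, i < ρ → g i = 1 := by
    intro i hi
    apply Finset.prod_eq_one
    intro j hj
    have hjk : j ≠ k := by
      intro hjk
      exact (Finset.disjoint_left.mp (R.layers_disjoint i ρ (ne_of_lt hi)) hj) (hjk ▸ hk)
    rw [hu', Function.update_of_ne hjk]
    exact neq_add _ _ (h1 i hi j hj)
  have hsplit : List.ofFn g =
      (List.ofFn g).take (ρ : ℕ) ++ 0 :: (List.ofFn g).drop ((ρ : ℕ) + 1) := by
    conv_lhs => rw [← List.take_append_drop (ρ : ℕ) (List.ofFn g)]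
    congr 1
    rw [List.drop_eq_getElem_cons hρl]
    congr 1
    rw [List.getElem_ofFn]
    simpa using hgρ
  have htake1 : ∀ m ∈ (List.ofFn g).take (ρ : ℕ), m = (1 : ZMod 2) := by
    intro m hm
    obtain ⟨i, hi, hget⟩ := List.mem_iff_getElem.mp hm
    have hi' : i < (ρ : ℕ) := lt_of_lt_of_le hi (by simp [List.length_take])
    rw [List.getElem_take, List.getElem_ofFn] at hget
    rw [← hget]
    exact hg1 ⟨i, by omega⟩ hi'
  have htlen : ((List.ofFn g).take (ρ : ℕ)).length = (ρ : ℕ) := by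
    simp [List.length_take]
  have hnest : ∀ p, nestAux (List.ofFn g) p = 1 + ((ρ : ℕ) : ZMod 2) := by
    intro p
    rw [hsplit, nestAux_ones_zero _ _ _ htake1, htlen]
  have hFu' : F u' t = v t + 1 := by
    have hre := R.repr_eq u'
    rw [hre, hnest]
    have key : ∀ b c w : ZMod 2, b + c = w + 1 → 1 + c + 1 + b = w + 1 := by decide
    exact key _ _ _ h4
  have hterm : expressEdge F k t u t = v t + 1 := by
    simp only [expressEdge, if_pos rfl]
    exact hFu'
  refine ⟨hterm, fun heq => ?_⟩
  have h5 := congrFun heq t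
  rw [hterm] at h5
  exact (by decide : ∀ w : ZMod 2, w + 1 ≠ w) (v t) h5
end

section
/- Let f : (𝔽₂)ⁿ → 𝔽₂ admit a layer representation with layers L₁,…,L_r of sizes ℓ₁,…,ℓ_r, and let k ∈ L_ρ for some 1 ≤ ρ ≤ r (so x_k is a canalizing variable lying in the ρ-th layer). Then the number of states x ∈ (𝔽₂)ⁿ with f(x[k := 0]) ≠ f(x) is at most 2^{n − (ℓ₁ + ℓ₂ + ⋯ + ℓ_ρ)}. In particular, in a Boolean network F = (f₁,…,f_n) with f_t = f, deleting the edge x_k → x_t changes at most 2^{n − (ℓ₁ + ⋯ + ℓ_ρ)} of the 2ⁿ state-space transitions, i.e., the proportion of changed transitions is at most (1/2)^{ℓ₁ + ⋯ + ℓ_ρ}. -/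
lemma zmod2_ne_zero {c : ZMod 2} (h : c ≠ 0) : c = 1 := by
  revert h; exact (by decide : ∀ c : ZMod 2, c ≠ 0 → c = 1) c

/-- Key structural lemma: if two lists of monomial values agree except at
position `ρ` and the nested expressions differ, then all values before `ρ`
are `1` and the values at `ρ` differ. -/
lemma nest_key : ∀ (r : ℕ) (M M' : Fin r → ZMod 2) (p : ZMod 2) (ρ : Fin r),
    (∀ i, i ≠ ρ → M i = M' i) →
    nestAux (List.ofFn M) p ≠ nestAux (List.ofFn M') p →
    (∀ i, i < ρ → M i = 1) ∧ M ρ ≠ M' ρ := by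
  intro r
  induction r with
  | zero => exact fun M M' p ρ => ρ.elim0
  | succ r ih =>
    intro M M' p ρ hM hne
    rw [List.ofFn_succ, List.ofFn_succ] at hne
    simp only [nestAux] at hne
    induction ρ using Fin.cases with
    | zero =>
      have htail : (List.ofFn fun i : Fin r => M i.succ)
          = List.ofFn fun i : Fin r => M' i.succ := by
        congr 1; funext i; exact hM i.succ (Fin.succ_ne_zero i)
      rw [htail] at hne
      refine ⟨fun i hi => absurd hi (by simp), fun h => hne (by rw [h])⟩
    | succ j =>
      have h0 : M 0 = M' 0 := hM 0 (Fin.succ_ne_zero j).symm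
      rw [← h0] at hne
      have hM0 : M 0 = 1 := by
        apply zmod2_ne_zero
        intro h; rw [h] at hne; simp at hne
      have hX : nestAux (List.ofFn fun i : Fin r => M i.succ) p
          ≠ nestAux (List.ofFn fun i : Fin r => M' i.succ) p := by
        intro h; exact hne (by rw [h])
      obtain ⟨h1, h2⟩ := ih (fun i => M i.succ) (fun i => M' i.succ) p j
        (fun i hi => hM i.succ (fun hc => hi (Fin.succ_injective _ hc))) hX
      refine ⟨fun i hi => ?_, h2⟩
      induction i using Fin.cases with
      | zero => exact hM0
      | succ i' => exact h1 i' (Fin.succ_lt_succ_iff.mp hi)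

/-- Method 2(a): if `x_k` is a canalizing variable of `f` lying in the `ρ`-th layer
(`0`-indexed here), then setting the `k`-th input to `0` changes the value of `f` on
at most `2 ^ (n − (ℓ₁ + ⋯ + ℓ_ρ))` states, where `ℓ₁, …, ℓ_ρ` are the sizes of the
layers that are at least as dominant as that of `x_k`.  Consequently, in a Boolean
network `F` whose `t`-th coordinate function is `f`, deleting the edge `x_k → x_t`
changes at most `2 ^ (n − (ℓ₁ + ⋯ + ℓ_ρ))` of the `2ⁿ` state-space transitions. -/
theorem edge_deletion_change_bound_canalizing {n : ℕ}
    (f : (Fin n → ZMod 2) → ZMod 2) (R : LayerRep n f)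
    (k : Fin n) (ρ : Fin R.r) (hk : k ∈ R.L ρ) :
    (Finset.univ.filter fun x : Fin n → ZMod 2 =>
        f (Function.update x k 0) ≠ f x).card
      ≤ 2 ^ (n - ∑ i ∈ Finset.Iic ρ, (R.L i).card) ∧
    ∀ (F : (Fin n → ZMod 2) → Fin n → ZMod 2) (t : Fin n),
      (∀ x, F x t = f x) →
      (Finset.univ.filter fun x : Fin n → ZMod 2 =>
          deleteEdge F k t x ≠ F x).card
        ≤ 2 ^ (n - ∑ i ∈ Finset.Iic ρ, (R.L i).card) := by
  classical
  set S : Finset (Fin n) := (Finset.Iic ρ).biUnion R.L with hSdef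
  have hScard : S.card = ∑ i ∈ Finset.Iic ρ, (R.L i).card :=
    Finset.card_biUnion (fun i _ j _ hij => R.layers_disjoint i j hij)
  set g : Fin n → ZMod 2 := fun j => if j = k then 1 else 1 + R.a j with hgdef
  -- main pointwise claim
  have main : ∀ x : Fin n → ZMod 2, f (Function.update x k 0) ≠ f x →
      ∀ j ∈ S, x j = g j := by
    intro x hne j hj
    set x' := Function.update x k 0 with hx'
    have hPc : R.Pc x' = R.Pc x := by
      apply R.Pc_depends
      intro j' hj'
      have hjk : j' ≠ k := fun h => hj' ρ (h ▸ hk)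
      simp [hx', Function.update_of_ne hjk]
    have hnest : nestAux (List.ofFn fun i => ∏ j ∈ R.L i, (x' j + R.a j)) (R.Pc x)
        ≠ nestAux (List.ofFn fun i => ∏ j ∈ R.L i, (x j + R.a j)) (R.Pc x) := by
      intro h
      apply hne
      rw [R.repr_eq, R.repr_eq, hPc, h]
    have hMeq : ∀ i : Fin R.r, i ≠ ρ →
        (∏ j ∈ R.L i, (x' j + R.a j)) = ∏ j ∈ R.L i, (x j + R.a j) := by
      intro i hi
      refine Finset.prod_congr rfl fun j' hj' => ?_
      have hjk : j' ≠ k := by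
        intro h
        exact (Finset.disjoint_left.mp (R.layers_disjoint i ρ hi)) hj' (h ▸ hk)
      simp [hx', Function.update_of_ne hjk]
    obtain ⟨h1, h2⟩ := nest_key R.r _ _ (R.Pc x) ρ hMeq hnest
    -- analyze the ρ-th layer
    have hprodx : (x k + R.a k) * ∏ j ∈ (R.L ρ).erase k, (x j + R.a j)
        = ∏ j ∈ R.L ρ, (x j + R.a j) := Finset.mul_prod_erase (R.L ρ) (fun j => x j + R.a j) hk
    have hprodx' : (x' k + R.a k) * ∏ j ∈ (R.L ρ).erase k, (x' j + R.a j)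
        = ∏ j ∈ R.L ρ, (x' j + R.a j) := Finset.mul_prod_erase (R.L ρ) (fun j => x' j + R.a j) hk
    have hQ : (∏ j ∈ (R.L ρ).erase k, (x' j + R.a j))
        = ∏ j ∈ (R.L ρ).erase k, (x j + R.a j) := by
      refine Finset.prod_congr rfl fun j' hj' => ?_
      have hjk : j' ≠ k := (Finset.mem_erase.mp hj').1
      simp [hx', Function.update_of_ne hjk]
    have hxk0 : x' k = 0 := Function.update_self k 0 x
    set Q : ZMod 2 := ∏ j ∈ (R.L ρ).erase k, (x j + R.a j) with hQdef
    have h2' : R.a k * Q ≠ (x k + R.a k) * Q := by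
      intro h
      apply h2
      rw [← hprodx, ← hprodx', hQ, hxk0, zero_add, h]
    have hQ1 : Q = 1 := by
      apply zmod2_ne_zero
      intro h
      exact h2' (by rw [h, mul_zero, mul_zero])
    have hxk : x k = 1 := by
      apply zmod2_ne_zero
      intro h
      exact h2' (by rw [h, zero_add])
    -- factors of a product equal to 1 are 1
    have factor_one : ∀ (T : Finset (Fin n)), (∏ j ∈ T, (x j + R.a j)) = 1 →
        ∀ j ∈ T, x j = 1 + R.a j := by
      intro T hT j' hj'
      have hf : x j' + R.a j' = 1 := by
        apply zmod2_ne_zero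
        intro h
        rw [Finset.prod_eq_zero hj' h] at hT
        exact zero_ne_one hT
      have : x j' + R.a j' + R.a j' = 1 + R.a j' := by rw [hf]
      simpa [add_assoc, CharTwo.add_self_eq_zero] using this
    -- now finish
    obtain ⟨i, hiIic, hjLi⟩ := Finset.mem_biUnion.mp hj
    by_cases hjk : j = k
    · simp [hgdef, hjk, hxk]
    · have hgj : g j = 1 + R.a j := by simp [hgdef, hjk]
      rw [hgj]
      by_cases hiρ : i = ρ
      · subst hiρ
        exact factor_one _ hQ1 j (Finset.mem_erase.mpr ⟨hjk, hjLi⟩)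
      · have hilt : i < ρ := lt_of_le_of_ne (Finset.mem_Iic.mp hiIic) hiρ
        have := h1 i hilt
        rw [hMeq i hiρ] at this
        exact factor_one _ this j hjLi
  -- cardinality bound for the constrained set
  have hcard2 : (Finset.univ.filter fun x : Fin n → ZMod 2 =>
      ∀ j ∈ S, x j = g j).card ≤ 2 ^ (n - S.card) := by
    have hinj : Set.InjOn
        (fun (x : Fin n → ZMod 2) (j : ↥(Sᶜ : Finset (Fin n))) => x j)
        ↑(Finset.univ.filter fun x : Fin n → ZMod 2 => ∀ j ∈ S, x j = g j) := by
      intro x hx y hy hxy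
      simp only [Finset.coe_filter, Set.mem_setOf_eq] at hx hy
      funext j
      by_cases hj : j ∈ S
      · rw [hx.2 j hj, hy.2 j hj]
      · exact congrFun hxy ⟨j, Finset.mem_compl.mpr hj⟩
    have := Finset.card_le_card_of_injOn
      (fun (x : Fin n → ZMod 2) (j : ↥(Sᶜ : Finset (Fin n))) => x j)
      (fun a _ => Finset.mem_univ _) hinj
    calc (Finset.univ.filter fun x : Fin n → ZMod 2 => ∀ j ∈ S, x j = g j).card
        ≤ (Finset.univ : Finset (↥(Sᶜ : Finset (Fin n)) → ZMod 2)).card := this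
      _ = 2 ^ (n - S.card) := by
          rw [Finset.card_univ, Fintype.card_fun, Fintype.card_coe,
            Finset.card_compl, Fintype.card_fin]
          norm_num
  have bound1 : (Finset.univ.filter fun x : Fin n → ZMod 2 =>
      f (Function.update x k 0) ≠ f x).card
      ≤ 2 ^ (n - ∑ i ∈ Finset.Iic ρ, (R.L i).card) := by
    rw [← hScard]
    refine le_trans (Finset.card_le_card ?_) hcard2
    intro x hx
    rw [Finset.mem_filter] at hx ⊢
    exact ⟨Finset.mem_univ _, main x hx.2⟩
  refine ⟨bound1, ?_⟩
  intro F t hFt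
  have hEq : (Finset.univ.filter fun x : Fin n → ZMod 2 => deleteEdge F k t x ≠ F x)
      = Finset.univ.filter fun x : Fin n → ZMod 2 =>
          f (Function.update x k 0) ≠ f x := by
    apply Finset.filter_congr
    intro x _
    constructor
    · intro h
      intro hcontra
      apply h
      funext i
      by_cases hi : i = t
      · subst hi
        simp [deleteEdge, hFt, hcontra]
      · simp [deleteEdge, hi]
    · intro h hcontra
      apply h
      have := congrFun hcontra t
      simp only [deleteEdge, if_pos rfl] at this
      rw [hFt, hFt] at this
      exact this
  rw [hEq]
  exact bound1
end

section
/- Let f : (𝔽₂)ⁿ → 𝔽₂ admit a layer representation with layers L₁,…,L_r and canalizing depth d = |L₁| + ⋯ + |L_r|, and let k be an index with k ∉ L₁ ∪ ⋯ ∪ L_r (so x_k is not a canalizing variable of f; it is a variable of the core polynomial P_c). Then the number of states x ∈ (𝔽₂)ⁿ with f(x[k := 0]) ≠ f(x) is at most 2^{n − d − 1}. In particular, in a Boolean network F = (f₁,…,f_n) with f_t = f, deleting the edge x_k → x_t changes at most 2^{n − d − 1} of the 2ⁿ state-space transitions. -/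
lemma nestAux_indep (ms : List (ZMod 2)) (p q : ZMod 2) (h : (0:ZMod 2) ∈ ms) :
    nestAux ms p = nestAux ms q := by
  induction ms with
  | nil => simp at h
  | cons m ms ih =>
    rcases List.mem_cons.mp h with h0 | h0
    · simp [nestAux, ← h0]
    · simp [nestAux, ih h0]

/-- Method 2(b): if `x_k` is not a canalizing variable of `f` (it lies outside all
layers, i.e. it is a variable of the core polynomial `P_c`), and `d = ℓ₁ + ⋯ + ℓ_r`
is the canalizing depth of `f`, then setting the `k`-th input to `0` changes the
value of `f` on at most `2 ^ (n − d − 1)` states.  Consequently, in a Boolean network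
`F` whose `t`-th coordinate function is `f`, deleting the edge `x_k → x_t` changes at
most `2 ^ (n − d − 1)` of the `2ⁿ` state-space transitions. -/
theorem edge_deletion_change_bound_noncanalizing {n : ℕ}
    (f : (Fin n → ZMod 2) → ZMod 2) (R : LayerRep n f)
    (k : Fin n) (hk : ∀ i, k ∉ R.L i) :
    (Finset.univ.filter fun x : Fin n → ZMod 2 =>
        f (Function.update x k 0) ≠ f x).card
      ≤ 2 ^ (n - (∑ i, (R.L i).card) - 1) ∧
    ∀ (F : (Fin n → ZMod 2) → Fin n → ZMod 2) (t : Fin n),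
      (∀ x, F x t = f x) →
      (Finset.univ.filter fun x : Fin n → ZMod 2 =>
          deleteEdge F k t x ≠ F x).card
        ≤ 2 ^ (n - (∑ i, (R.L i).card) - 1) := by
  classical
  set d := ∑ i, (R.L i).card with hd
  have h2 : ∀ v : ZMod 2, v = 0 ∨ v = 1 := by decide
  set U : Finset (Fin n) := Finset.univ.biUnion (fun i => R.L i) with hU
  have hkU : k ∉ U := by
    simp only [hU, Finset.mem_biUnion, Finset.mem_univ, true_and, not_exists]
    exact hk
  set T : Finset (Fin n) := insert k U with hT
  have hTcard : T.card = d + 1 := by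
    rw [hT, Finset.card_insert_of_notMem hkU, hU,
      Finset.card_biUnion (fun i _ j _ hij => R.layers_disjoint i j hij)]
  have key : (Finset.univ.filter fun x : Fin n → ZMod 2 =>
      f (Function.update x k 0) ≠ f x).card ≤ 2 ^ (n - d - 1) := by
    have hsub : ∀ x ∈ (Finset.univ.filter fun x : Fin n → ZMod 2 =>
        f (Function.update x k 0) ≠ f x), ∀ j ∈ T,
        x j = if j = k then 1 else 1 + R.a j := by
      intro x hx j hj
      simp only [Finset.mem_filter, Finset.mem_univ, true_and] at hx
      have hne := hx
      have hxk : x k = 1 := by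
        rcases h2 (x k) with h0 | h1
        · exfalso
          apply hne
          have : Function.update x k 0 = x := by
            funext j
            rcases eq_or_ne j k with rfl | hjk
            · simp [h0]
            · simp [Function.update_of_ne hjk]
          rw [this]
        · exact h1
      have hlist : (List.ofFn fun i => ∏ j ∈ R.L i, (Function.update x k 0 j + R.a j))
          = List.ofFn fun i => ∏ j ∈ R.L i, (x j + R.a j) := by
        congr 1
        funext i
        refine Finset.prod_congr rfl fun j hj => ?_
        have hjne : j ≠ k := fun h => hk i (h ▸ hj)
        rw [Function.update_of_ne hjne]
      have hne' : nestAux (List.ofFn fun i => ∏ j ∈ R.L i, (x j + R.a j))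
            (R.Pc (Function.update x k 0))
          ≠ nestAux (List.ofFn fun i => ∏ j ∈ R.L i, (x j + R.a j)) (R.Pc x) := by
        intro h
        apply hne
        rw [R.repr_eq, R.repr_eq, hlist, h]
      have hall : ∀ i, (∏ j ∈ R.L i, (x j + R.a j)) = 1 := by
        intro i
        rcases h2 (∏ j ∈ R.L i, (x j + R.a j)) with h0 | h1
        · exact absurd (nestAux_indep _ _ _ (by
            rw [List.mem_ofFn]
            exact ⟨i, h0⟩)) hne'
        · exact h1
      rcases Finset.mem_insert.mp hj with rfl | hjU
      · simp [hxk]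
      · rw [if_neg (by rintro rfl; exact hkU hjU)]
        rw [hU, Finset.mem_biUnion] at hjU
        obtain ⟨i, -, hji⟩ := hjU
        have hfac : x j + R.a j = 1 := by
          rcases h2 (x j + R.a j) with h0 | h1
          · exfalso
            have hz := Finset.prod_eq_zero (f := fun j => x j + R.a j) hji h0
            rw [hall i] at hz
            exact one_ne_zero hz
          · exact h1
        rcases h2 (R.a j) with ha | ha <;> rcases h2 (x j) with hx' | hx' <;>
          rw [ha, hx'] at hfac ⊢ <;> revert hfac <;> decide
    have hinj : (Finset.univ.filter fun x : Fin n → ZMod 2 =>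
        f (Function.update x k 0) ≠ f x).card
        ≤ (Finset.univ : Finset ((Tᶜ : Finset (Fin n)) → ZMod 2)).card := by
      apply Finset.card_le_card_of_injOn
        (fun x (j : (Tᶜ : Finset (Fin n))) => x j)
      · intro x _
        exact Finset.mem_univ _
      · intro x hx y hy hxy
        funext j
        by_cases hjT : j ∈ T
        · rw [hsub x hx j hjT, hsub y hy j hjT]
        · exact congrFun hxy ⟨j, Finset.mem_compl.mpr hjT⟩
    calc (Finset.univ.filter fun x : Fin n → ZMod 2 =>
            f (Function.update x k 0) ≠ f x).card
        ≤ (Finset.univ : Finset ((Tᶜ : Finset (Fin n)) → ZMod 2)).card := hinj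
      _ = 2 ^ (n - d - 1) := by
          rw [Finset.card_univ, Fintype.card_fun, Fintype.card_coe,
            Finset.card_compl, hTcard, Fintype.card_fin, ZMod.card,
            Nat.sub_sub]
  refine ⟨key, fun F t hFt => ?_⟩
  have hEq : (Finset.univ.filter fun x : Fin n → ZMod 2 => deleteEdge F k t x ≠ F x)
      = Finset.univ.filter fun x : Fin n → ZMod 2 =>
        f (Function.update x k 0) ≠ f x := by
    ext x
    simp only [Finset.mem_filter, Finset.mem_univ, true_and]
    constructor
    · intro h h'
      apply h
      funext i
      by_cases hi : i = t
      · subst hi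
        simp [deleteEdge, hFt, h']
      · simp [deleteEdge, hi]
    · intro h h'
      apply h
      have h'' := congrFun h' t
      simpa [deleteEdge, hFt] using h''
  rw [hEq]
  exact key
end

section
/- Let f : (𝔽₂)ⁿ → 𝔽₂ admit a layer representation with layers L₁,…,L_r of sizes ℓ₁,…,ℓ_r, and let k ∈ L_ρ for some 1 ≤ ρ ≤ r. Then the number of states x ∈ (𝔽₂)ⁿ with f(x[k := 1]) ≠ f(x) is at most 2^{n − (ℓ₁ + ℓ₂ + ⋯ + ℓ_ρ)}; that is, the upper bound on the number of changed state-space transitions for edge deletion remains the same when the edge x_k → x_t is constantly expressed instead of deleted. -/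
lemma nestAux_eq_of_zero_s5 (p q : ZMod 2) :
    ∀ (i : ℕ) (l₁ l₂ : List (ZMod 2)),
    (∀ j, j < i → l₁.getD j 1 = l₂.getD j 1) →
    l₁.getD i 1 = 0 → l₂.getD i 1 = 0 →
    nestAux l₁ p = nestAux l₂ q := by
  intro i
  induction i with
  | zero =>
    intro l₁ l₂ _ h₁ h₂
    match l₁, l₂ with
    | [], _ => simp [List.getD] at h₁
    | _ :: _, [] => simp [List.getD] at h₂
    | m₁ :: t₁, m₂ :: t₂ =>
      simp [List.getD] at h₁ h₂
      simp [nestAux, h₁, h₂]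
  | succ i ih =>
    intro l₁ l₂ hpre h₁ h₂
    match l₁, l₂ with
    | [], _ => simp [List.getD] at h₁
    | _ :: _, [] => simp [List.getD] at h₂
    | m₁ :: t₁, m₂ :: t₂ =>
      have hm : m₁ = m₂ := by
        have := hpre 0 (Nat.succ_pos i); simpa [List.getD] using this
      have ht : nestAux t₁ p = nestAux t₂ q :=
        ih t₁ t₂ (fun j hj => by
            have := hpre (j+1) (by omega); simpa [List.getD] using this)
          (by simpa [List.getD] using h₁) (by simpa [List.getD] using h₂)
      simp [nestAux, hm, ht]


lemma card_fixed_le {n : ℕ} (T : Finset (Fin n)) (g : Fin n → ZMod 2) :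
    (Finset.univ.filter fun x : Fin n → ZMod 2 => ∀ j ∈ T, x j = g j).card
      ≤ 2 ^ (n - T.card) := by
  classical
  have h := Finset.card_le_card_of_injOn
    (s := Finset.univ.filter fun x : Fin n → ZMod 2 => ∀ j ∈ T, x j = g j)
    (f := fun (x : Fin n → ZMod 2) (j : ↥(Tᶜ)) => x j.1)
    (t := (Finset.univ : Finset (↥(Tᶜ) → ZMod 2)))
    (fun x _ => Finset.mem_univ _)
    (by
      intro x hx y hy hxy
      simp only [Finset.mem_coe, Finset.mem_filter, Finset.mem_univ, true_and] at hx hy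
      funext j
      by_cases hj : j ∈ T
      · rw [hx j hj, hy j hj]
      · exact congrFun hxy ⟨j, Finset.mem_compl.2 hj⟩)
  calc _ ≤ (Finset.univ : Finset (↥(Tᶜ) → ZMod 2)).card := h
    _ = 2 ^ (n - T.card) := by
        rw [Finset.card_univ, Fintype.card_fun, Fintype.card_coe,
          Finset.card_compl, Fintype.card_fin]
        rfl


/-- The analogue of Method 2(a) for constant expression of an edge: if `x_k` is a
canalizing variable of `f` lying in the `ρ`-th layer (`0`-indexed here), then setting
the `k`-th input to `1` changes the value of `f` on at most
`2 ^ (n − (ℓ₁ + ⋯ + ℓ_ρ))` states, where `ℓ₁, …, ℓ_ρ` are the sizes of the layers that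
are at least as dominant as that of `x_k`; i.e. the upper bound on the number of
changed state-space transitions for edge deletion remains the same when the edge
`x_k → x_t` is constantly expressed instead of deleted. -/
theorem edge_expression_change_bound_canalizing {n : ℕ}
    (f : (Fin n → ZMod 2) → ZMod 2) (R : LayerRep n f)
    (k : Fin n) (ρ : Fin R.r) (hk : k ∈ R.L ρ) :
    (Finset.univ.filter fun x : Fin n → ZMod 2 =>
        f (Function.update x k 1) ≠ f x).card
      ≤ 2 ^ (n - ∑ i ∈ Finset.Iic ρ, (R.L i).card) := by
  classical
  set T : Finset (Fin n) := (Finset.Iic ρ).biUnion R.L with hT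
  set g : Fin n → ZMod 2 := fun j => if j = k then 0 else R.a j + 1 with hg
  -- key: a changed state satisfies all the constraints
  have hsub : (Finset.univ.filter fun x : Fin n → ZMod 2 =>
        f (Function.update x k 1) ≠ f x)
      ⊆ Finset.univ.filter fun x : Fin n → ZMod 2 => ∀ j ∈ T, x j = g j := by
    intro x hx
    simp only [Finset.mem_filter, Finset.mem_univ, true_and] at hx ⊢
    by_contra hcon
    push_neg at hcon
    obtain ⟨j, hjT, hne⟩ := hcon
    apply hx
    by_cases hjk : j = k
    · -- then x k ≠ 0, so x k = 1 and the update does nothing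
      subst hjk
      have hxj : x j = 1 := by
        have : x j ≠ 0 := by simpa [hg] using hne
        revert this; generalize x j = v; revert v; decide
      rw [← hxj, Function.update_eq_self]
    · -- some other constrained variable violated: a zero factor kills both sides
      obtain ⟨i, hiρ, hjL⟩ := Finset.mem_biUnion.1 hjT
      have hiρ' : i ≤ ρ := Finset.mem_Iic.1 hiρ
      have hz : x j + R.a j = 0 := by
        have hne' : x j ≠ R.a j + 1 := by simpa [hg, hjk] using hne
        revert hne'; generalize x j = v; generalize R.a j = w
        revert v w; decide
      rw [R.repr_eq, R.repr_eq]
      have hPc : R.Pc (Function.update x k 1) = R.Pc x := by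
        apply R.Pc_depends
        intro j' hj'
        have : j' ≠ k := fun h => (hj' ρ) (h ▸ hk)
        rw [Function.update_of_ne this]
      rw [hPc]
      congr 1
      congr 1
      have hget : ∀ (F : Fin R.r → ZMod 2) (m : ℕ) (hm : m < R.r),
          (List.ofFn F).getD m 1 = F ⟨m, hm⟩ := by
        intro F m hm
        rw [List.getD_eq_getElem _ _ (by simpa using hm), List.getElem_ofFn]
      apply nestAux_eq_of_zero_s5 _ _ i.1
      · intro m hm
        have hmr : m < R.r := hm.trans i.isLt
        rw [hget _ _ hmr, hget _ _ hmr]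
        have hne' : (⟨m, hmr⟩ : Fin R.r) ≠ ρ := by
          intro h
          have hm' : m = (ρ : ℕ) := congrArg Fin.val h
          have := hiρ'
          omega
        have hk' : k ∉ R.L ⟨m, hmr⟩ :=
          fun hkm => Finset.disjoint_left.1 (R.layers_disjoint _ _ hne') hkm hk
        refine Finset.prod_congr rfl fun j' hj' => ?_
        rw [Function.update_of_ne (fun h => hk' (by rw [← h]; exact hj'))]
      · rw [hget _ _ i.isLt]
        refine Finset.prod_eq_zero (by simpa using hjL) ?_
        rw [Function.update_of_ne hjk, hz]
      · rw [hget _ _ i.isLt]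
        exact Finset.prod_eq_zero (by simpa using hjL) hz
  have h1 := Finset.card_le_card hsub
  have h2 := card_fixed_le T g
  have h3 : T.card = ∑ i ∈ Finset.Iic ρ, (R.L i).card :=
    Finset.card_biUnion (fun i _ j _ hij => R.layers_disjoint i j hij)
  rw [h3] at h2
  exact le_trans h1 h2
end

section
/- Let f : (𝔽₂)ⁿ → 𝔽₂ admit a layer representation with layers L₁,…,L_r of sizes ℓ₁,…,ℓ_r, canalizing inputs (a_j), and let k ∈ L_ρ for some 1 ≤ ρ ≤ r. Suppose that the function g, obtained from f by substituting the non-canalizing value a_j + 1 for the variable x_j for every j ∈ (L₁ ∪ ⋯ ∪ L_ρ) \ {k}, equals x_k or x_k + 1 identically as a function of the remaining variables. Then the bound of the edge-deletion theorem is attained exactly: the number of states x ∈ (𝔽₂)ⁿ with f(x[k := 0]) ≠ f(x) equals 2^{n − (ℓ₁ + ℓ₂ + ⋯ + ℓ_ρ)}. -/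
lemma nestAux_zero_cong : ∀ (i : ℕ) (l1 l2 : List (ZMod 2)) (p1 p2 : ZMod 2),
    (∀ m < i, l1[m]? = l2[m]?) → l1[i]? = some 0 → l2[i]? = some 0 →
    nestAux l1 p1 = nestAux l2 p2 := by
  intro i
  induction i with
  | zero =>
    rintro (_ | ⟨m1, t1⟩) (_ | ⟨m2, t2⟩) p1 p2 _ h1 h2 <;> simp_all [nestAux]
  | succ i ih =>
    rintro (_ | ⟨m1, t1⟩) (_ | ⟨m2, t2⟩) p1 p2 hagree h1 h2 <;> simp_all [nestAux]
    have hm : m1 = m2 := by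
      have := hagree 0 (by omega); simpa using this
    rw [hm, ih t1 t2 p1 p2 (fun m hm => by simpa using hagree (m+1) (by omega)) h1 h2]

/-- Sharpness of the bound in Method 2(a): let `x_k` be a canalizing variable of `f`
lying in the `ρ`-th layer (`0`-indexed here).  If the function obtained from `f` by
substituting the non-canalizing value `a_j + 1` for the variable `x_j`, for every
`j ∈ (L₁ ∪ ⋯ ∪ L_ρ) \ {k}`, equals `x_k` or `x_k + 1` identically, then the number of
states `x` with `f(x[k := 0]) ≠ f(x)` is exactly `2 ^ (n − (ℓ₁ + ⋯ + ℓ_ρ))`. -/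
theorem edge_deletion_change_bound_sharp {n : ℕ}
    (f : (Fin n → ZMod 2) → ZMod 2) (R : LayerRep n f)
    (k : Fin n) (ρ : Fin R.r) (hk : k ∈ R.L ρ)
    (hsub :
      (∀ x : Fin n → ZMod 2,
        f (fun j => if j ∈ (Finset.Iic ρ).biUnion R.L \ {k} then R.a j + 1 else x j)
          = x k) ∨
      (∀ x : Fin n → ZMod 2,
        f (fun j => if j ∈ (Finset.Iic ρ).biUnion R.L \ {k} then R.a j + 1 else x j)
          = x k + 1)) :
    (Finset.univ.filter fun x : Fin n → ZMod 2 =>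
        f (Function.update x k 0) ≠ f x).card
      = 2 ^ (n - ∑ i ∈ Finset.Iic ρ, (R.L i).card) := by
  classical
  set S : Finset (Fin n) := (Finset.Iic ρ).biUnion R.L with hS
  set g : Fin n → ZMod 2 := fun j => if j = k then 1 else R.a j + 1 with hg
  have hkS : k ∈ S := Finset.mem_biUnion.2 ⟨ρ, Finset.mem_Iic.2 le_rfl, hk⟩
  -- characterization of the flip set
  have key : ∀ x : Fin n → ZMod 2,
      (f (Function.update x k 0) ≠ f x) ↔ (∀ j ∈ S, x j = g j) := by
    intro x
    constructor
    · -- contrapositive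
      intro hne
      by_contra hnot
      push_neg at hnot
      obtain ⟨j, hjS, hj⟩ := hnot
      by_cases hjk : j = k
      · -- x k ≠ 1, so x k = 0, update does nothing
        subst hjk
        simp only [hg, if_pos rfl] at hj
        have hx0 : x j = 0 := by
          have : ∀ z : ZMod 2, z ≠ 1 → z = 0 := by decide
          exact this _ hj
        apply hne
        rw [← hx0, Function.update_eq_self]
      · -- x j = a j, with j in layer i ≤ ρ : nestAux agrees
        simp only [hg, if_neg hjk] at hj
        have hxa : x j = R.a j := by
          have : ∀ z w : ZMod 2, z ≠ w + 1 → z = w := by decide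
          exact this _ _ hj
        obtain ⟨i, hiρ, hji⟩ := Finset.mem_biUnion.1 hjS
        rw [Finset.mem_Iic] at hiρ
        apply hne
        rw [R.repr_eq x, R.repr_eq (Function.update x k 0)]
        congr 2
        apply nestAux_zero_cong i.val
        · -- agreement below i
          intro m hm
          have hmr : m < R.r := lt_trans hm i.isLt
          rw [List.getElem?_ofFn, List.getElem?_ofFn,
            dif_pos hmr, dif_pos hmr]
          have hmρ : (⟨m, hmr⟩ : Fin R.r) ≠ ρ := by
            intro h
            have : m = ρ.val := by simpa using congrArg Fin.val h
            have : m < ρ.val := lt_of_lt_of_le hm (Finset.mem_Iic.1 ?_)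
            · omega
            · exact Finset.mem_Iic.2 hiρ
          congr 1
          refine Finset.prod_congr rfl fun j' hj' => ?_
          have hj'k : j' ≠ k := by
            intro h
            subst h
            exact (Finset.disjoint_left.1 (R.layers_disjoint _ _ hmρ) hj') hk
          rw [Function.update_of_ne hj'k]
        · -- value 0 at index i for updated x
          rw [List.getElem?_ofFn, dif_pos i.isLt]
          congr 1
          refine Finset.prod_eq_zero hji ?_
          rw [Function.update_of_ne hjk, hxa]
          exact CharTwo.add_self_eq_zero _
        · rw [List.getElem?_ofFn, dif_pos i.isLt]
          congr 1
          refine Finset.prod_eq_zero hji ?_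
          rw [hxa]
          exact CharTwo.add_self_eq_zero _
    · intro hall
      -- x agrees with the substituted pattern
      have hxk : x k = 1 := by simpa [hg] using hall k hkS
      have e1 : (fun j => if j ∈ S \ {k} then R.a j + 1 else x j) = x := by
        funext j
        by_cases hj : j ∈ S \ {k}
        · obtain ⟨hj1, hj2⟩ := Finset.mem_sdiff.1 hj
          simp only [Finset.mem_singleton] at hj2
          rw [if_pos hj]
          have : x j = R.a j + 1 := by simpa [hg, hj2] using hall j hj1
          rw [this]
        · rw [if_neg hj]
      have e2 : (fun j => if j ∈ S \ {k} then R.a j + 1 else Function.update x k 0 j)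
          = Function.update x k 0 := by
        funext j
        by_cases hj : j ∈ S \ {k}
        · obtain ⟨hj1, hj2⟩ := Finset.mem_sdiff.1 hj
          simp only [Finset.mem_singleton] at hj2
          rw [if_pos hj, Function.update_of_ne hj2]
          have : x j = R.a j + 1 := by simpa [hg, hj2] using hall j hj1
          rw [this]
        · rw [if_neg hj]
      rcases hsub with h | h
      · have h1 := h x
        have h2 := h (Function.update x k 0)
        rw [e1] at h1
        rw [e2] at h2
        rw [h1, h2, Function.update_self, hxk]
        decide
      · have h1 := h x
        have h2 := h (Function.update x k 0)
        rw [e1] at h1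
        rw [e2] at h2
        rw [h1, h2, Function.update_self, hxk]
        decide
  -- now count
  have hset : (Finset.univ.filter fun x : Fin n → ZMod 2 =>
      f (Function.update x k 0) ≠ f x)
      = Fintype.piFinset (fun j => if j ∈ S then ({g j} : Finset (ZMod 2)) else Finset.univ) := by
    ext x
    simp only [Finset.mem_filter, Finset.mem_univ, true_and, Fintype.mem_piFinset, key]
    constructor
    · intro h j
      by_cases hj : j ∈ S
      · rw [if_pos hj, Finset.mem_singleton]; exact h j hj
      · rw [if_neg hj]; exact Finset.mem_univ _
    · intro h j hj
      have := h j
      rw [if_pos hj, Finset.mem_singleton] at this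
      exact this
  rw [hset, Fintype.card_piFinset]
  have hcard : ∀ j : Fin n,
      (if j ∈ S then ({g j} : Finset (ZMod 2)) else Finset.univ).card
        = if j ∈ S then 1 else 2 := by
    intro j
    by_cases hj : j ∈ S <;> simp [hj]
  simp_rw [hcard]
  rw [Finset.prod_ite, Finset.prod_const_one, Finset.prod_const, one_mul]
  have hScard : S.card = ∑ i ∈ Finset.Iic ρ, (R.L i).card := by
    rw [hS]
    exact Finset.card_biUnion (fun i _ j _ hij => R.layers_disjoint i j hij)
  have : (Finset.univ.filter fun j : Fin n => j ∉ S).card = n - S.card := by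
    have hfS : Finset.univ.filter (fun j : Fin n => j ∈ S) = S := by
      ext j; simp
    rw [Finset.filter_not, hfS, Finset.card_sdiff_of_subset (Finset.subset_univ _),
      Finset.card_univ, Fintype.card_fin]
  rw [this, hScard]
end

section
/- In the p53–mdm2 Boolean network with DNA-damage input c = 1, the map F₁ has no fixed points, and the seven states (1,1,0,0), (1,1,1,0), (0,1,1,0), (0,1,1,1), (0,0,1,1), (0,0,0,1), (1,0,0,0) form a cycle of length seven: F₁(1,1,0,0) = (1,1,1,0), F₁(1,1,1,0) = (0,1,1,0), F₁(0,1,1,0) = (0,1,1,1), F₁(0,1,1,1) = (0,0,1,1), F₁(0,0,1,1) = (0,0,0,1), F₁(0,0,0,1) = (1,0,0,0), and F₁(1,0,0,0) = (1,1,0,0). -/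
/-- The p53–mdm2 Boolean network with DNA-damage input `c`, on states
`(ATM, p53, Wip1, Mdm2) = (x 0, x 1, x 2, x 3)`, with update rules
`ATM' = ¬Wip1 ∧ (ATM ∨ c)`, `p53' = ¬Mdm2 ∧ (ATM ∨ Wip1)`, `Wip1' = p53`,
`Mdm2' = ¬ATM ∧ (p53 ∨ Wip1)`. -/
def p53Net (c : Bool) (x : Fin 4 → Bool) : Fin 4 → Bool :=
  ![!x 2 && (x 0 || c),
    !x 3 && (x 0 || x 2),
    x 1,
    !x 0 && (x 1 || x 2)]

/-- With DNA-damage input `c = 1`, the p53–mdm2 network has no fixed points, and the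
seven states `(1,1,0,0), (1,1,1,0), (0,1,1,0), (0,1,1,1), (0,0,1,1), (0,0,0,1),
(1,0,0,0)` form a cycle of length seven. -/
theorem p53_damage_seven_cycle :
    (∀ x : Fin 4 → Bool, p53Net true x ≠ x) ∧
    p53Net true ![true, true, false, false] = ![true, true, true, false] ∧
    p53Net true ![true, true, true, false] = ![false, true, true, false] ∧
    p53Net true ![false, true, true, false] = ![false, true, true, true] ∧
    p53Net true ![false, true, true, true] = ![false, false, true, true] ∧
    p53Net true ![false, false, true, true] = ![false, false, false, true] ∧
    p53Net true ![false, false, false, true] = ![true, false, false, false] ∧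
    p53Net true ![true, false, false, false] = ![true, true, false, false] := by
  refine ⟨?_, ?_, ?_, ?_, ?_, ?_, ?_, ?_⟩
  · intro x h
    have h0 := congrFun h 0
    have h1 := congrFun h 1
    have h2 := congrFun h 2
    have h3 := congrFun h 3
    simp only [p53Net, Matrix.cons_val_zero, Matrix.cons_val_one, Matrix.head_cons,
      Matrix.cons_val_two, Matrix.tail_cons, Matrix.cons_val_three] at h0 h1 h2 h3
    revert h0 h1 h2 h3
    cases hx0 : x 0 <;> cases hx1 : x 1 <;> cases hx2 : x 2 <;> cases hx3 : x 3 <;>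
      simp [hx0, hx1, hx2, hx3]
  all_goals
    funext i
    fin_cases i <;> rfl
end

section
/- The mutated mammalian cell-cycle Boolean network F : {0,1}⁸ → {0,1}⁸ (Rb absent, CycD = 0) has a periodic orbit of minimal period 8: there exists a state x ∈ {0,1}⁸ with F⁸(x) = x and F^j(x) ≠ x for all 1 ≤ j ≤ 7. -/
/-- The mutated mammalian cell-cycle Boolean network (Rb absent, CycD = 0), on states
`(E2F, CycE, CycA, p27, Cdc20, Cdh1, Ubc, CycB) = (x 0, …, x 7)`, with update rules
`E2F' = (¬CycA ∧ ¬CycB) ∨ (p27 ∧ ¬CycB)`; `CycE' = E2F`;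
`CycA' = (E2F ∧ ¬Cdc20 ∧ ¬(Cdh1 ∧ Ubc)) ∨ (CycA ∧ ¬Cdc20 ∧ ¬(Cdh1 ∧ Ubc))`;
`p27' = (p27 ∧ ¬(CycE ∧ CycA) ∧ ¬CycB) ∨ (¬CycE ∧ ¬CycA ∧ ¬CycB)`;
`Cdc20' = CycB`; `Cdh1' = (¬CycA ∧ ¬CycB) ∨ Cdc20 ∨ (p27 ∧ ¬CycB)`;
`Ubc' = ¬Cdh1 ∨ (Cdh1 ∧ Ubc ∧ (Cdc20 ∨ CycA ∨ CycB))`; `CycB' = ¬Cdc20 ∧ ¬Cdh1`. -/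
def ccNet (x : Fin 8 → Bool) : Fin 8 → Bool :=
  ![(!x 2 && !x 7) || (x 3 && !x 7),
    x 0,
    (x 0 && !x 4 && !(x 5 && x 6)) || (x 2 && !x 4 && !(x 5 && x 6)),
    (x 3 && !(x 1 && x 2) && !x 7) || (!x 1 && !x 2 && !x 7),
    x 7,
    (!x 2 && !x 7) || x 4 || (x 3 && !x 7),
    !x 5 || (x 5 && x 6 && (x 4 || x 2 || x 7)),
    !x 4 && !x 5]

/-- The mutated cell-cycle network has a periodic orbit of minimal period 8. -/
theorem ccNet_has_eight_cycle :
    ∃ x : Fin 8 → Bool, ccNet^[8] x = x ∧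
      ∀ j : ℕ, 1 ≤ j → j ≤ 7 → ccNet^[j] x ≠ x := by
  refine ⟨![false, false, false, false, true, true, true, false], ?_, ?_⟩
  · show ccNet _ = _
    funext i; fin_cases i <;> rfl
  · intro j h1 h7
    interval_cases j <;> intro h <;> first
      | exact absurd (congrFun h 0) (by decide)
      | exact absurd (congrFun h 1) (by decide)
      | exact absurd (congrFun h 2) (by decide)
      | exact absurd (congrFun h 3) (by decide)
      | exact absurd (congrFun h 4) (by decide)
      | exact absurd (congrFun h 5) (by decide)
      | exact absurd (congrFun h 6) (by decide)
      | exact absurd (congrFun h 7) (by decide)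
end

section
/- Let F′ : {0,1}⁸ → {0,1}⁸ be obtained from the mutated mammalian cell-cycle Boolean network F (Rb absent, CycD = 0) by deleting the edge Cdh1 → Ubc, i.e., replacing the Ubc update rule by its value with the Cdh1 input set to 0 (so Ubc' = ¬0 ∨ (0 ∧ Ubc ∧ (Cdc20 ∨ CycA ∨ CycB)) = 1). Then F′ has a fixed point x* with x*_{p27} = 1 and x*_{Cdh1} = 1 whose basin of attraction contains more than 90% of the state space: the set {x ∈ {0,1}⁸ : ∃ m ≥ 0, F′^m(x) = x*} has cardinality at least 231 out of 256. -/
/-- Deleting the edge `x_k → x_t` in a Boolean network `F`: the coordinate function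
`f_t` is replaced by `x ↦ f_t(x[k := false])` (the `k`-th input set to `0`). -/
def deleteEdgeB {n : ℕ} (F : (Fin n → Bool) → Fin n → Bool) (k t : Fin n) :
    (Fin n → Bool) → Fin n → Bool :=
  fun x i => if i = t then F (Function.update x k false) t else F x i

/-- Constantly expressing the edge `x_k → x_t` in a Boolean network `F`: the
coordinate function `f_t` is replaced by `x ↦ f_t(x[k := true])` (the `k`-th input
set to `1`). -/
def expressEdgeB {n : ℕ} (F : (Fin n → Bool) → Fin n → Bool) (k t : Fin n) :
    (Fin n → Bool) → Fin n → Bool :=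
  fun x i => if i = t then F (Function.update x k true) t else F x i

set_option maxRecDepth 100000 in
set_option maxHeartbeats 4000000 in
/-- Deleting the edge Cdh1 → Ubc (indices `5 → 6`) in the mutated cell-cycle network
yields a network with a fixed point having `p27 = 1` (coordinate 3) and `Cdh1 = 1`
(coordinate 5) whose basin of attraction contains more than 90% of the state space:
at least 231 of the 256 states eventually reach it. -/
theorem ccNet_delete_Cdh1_Ubc :
    ∃ x : Fin 8 → Bool, deleteEdgeB ccNet 5 6 x = x ∧
      x 3 = true ∧ x 5 = true ∧
      231 ≤ Set.ncard {y : Fin 8 → Bool | ∃ m : ℕ, (deleteEdgeB ccNet 5 6)^[m] y = x} := by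

  refine ⟨![true, true, false, true, false, true, true, false], by decide, rfl, rfl, ?_⟩
  have hsub : ↑(Finset.univ.filter (fun y : Fin 8 → Bool =>
      (deleteEdgeB ccNet 5 6)^[6] y = ![true, true, false, true, false, true, true, false])) ⊆
      {y : Fin 8 → Bool | ∃ m : ℕ, (deleteEdgeB ccNet 5 6)^[m] y =
        ![true, true, false, true, false, true, true, false]} := by
    intro y hy
    simp only [Finset.coe_filter, Set.mem_setOf_eq] at hy
    exact ⟨6, hy.2⟩
  have hcard : 231 ≤ (Finset.univ.filter (fun y : Fin 8 → Bool =>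
      (deleteEdgeB ccNet 5 6)^[6] y = ![true, true, false, true, false, true, true, false])).card := by
    decide
  calc (231 : ℕ) ≤ _ := hcard
    _ = Set.ncard _ := (Set.ncard_coe_finset _).symm
    _ ≤ _ := Set.ncard_le_ncard hsub (Set.toFinite _)
end
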